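/- Let K be a Hilbert space, H ⊆ K a closed subspace with projection p, and suppose B ⊆ B(K) is a von Neumann algebra with pBp = B(H) (as operators on H) and such that the closed span of {θ_{s_1}(a_1)⋯θ_{s_k}(a_k)h : h ∈ H, a_i ∈ B(H)} equals K, where each θ_s is a normal *-endomorphism of B. If q ∈ B' is a projection commuting with all operators in B, then q = 0 or q = I_K. Hence B' = ℂ·I_K and B = B(K). -/

import Mathlib

open scoped InnerProductSpace

lemma scalar_on_range {K : Type*} [NormedAddCommGroup K] [InnerProductSpace ℂ K] [CompleteSpace K]
    (p : K →L[ℂ] K) (hp : IsSelfAdjoint p) (u : K →L[ℂ] K)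
    (hcomm : ∀ a : K →L[ℂ] K, a = p * a * p → u * a = a * u) :
    ∃ c : ℂ, ∀ h : K, p h = h → u h = c • h := by
  by_cases hex : ∃ h2 : K, p h2 = h2 ∧ h2 ≠ 0
  · obtain ⟨h2, hh2, hne⟩ := hex
    refine ⟨(⟪h2, h2⟫_ℂ)⁻¹ * ⟪h2, u h2⟫_ℂ, fun h1 hh1 => ?_⟩
    set a : K →L[ℂ] K := (innerSL ℂ h2).smulRight h1 with ha
    have hap : a = p * a * p := by
      ext x
      have : ⟪h2, p x⟫_ℂ = ⟪h2, x⟫_ℂ := by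
        rw [← ContinuousLinearMap.adjoint_inner_left,
          (ContinuousLinearMap.isSelfAdjoint_iff' (A := p)).mp hp, hh2]
      simp [ha, this, hh1]
    have := congrArg (fun f : K →L[ℂ] K => f h2) (hcomm a hap)
    simp only [ContinuousLinearMap.mul_apply, ha, ContinuousLinearMap.smulRight_apply,
      innerSL_apply_apply, map_smul] at this
    have hnz : ⟪h2, h2⟫_ℂ ≠ 0 := by
      simpa [inner_self_eq_zero] using hne
    rw [mul_smul, ← this, smul_smul, inv_mul_cancel₀ hnz, one_smul]
  · push_neg at hex
    exact ⟨0, fun h1 hh1 => by simp [hex h1 hh1]⟩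


/-- Let `K` be a Hilbert space, `p` the projection onto a closed
subspace `H`, and `B ⊆ B(K)` a von Neumann algebra containing `p` whose corner
`p B p` is all of `B(H)` (every operator supported on `H` belongs to `B`).
Let `θ_s` (for `s` in a commutative monoid `S`) be *-endomorphisms of `B`, and
suppose the closed span of `{θ_{s_1}(a_1) ⋯ θ_{s_k}(a_k) h : h ∈ H, a_i ∈ B(H)}`
is all of `K`. Then every projection `q` in the commutant `B'` is `0` or `1`;
hence `B' = ℂ·1` and `B = B(K)`. -/
theorem minimal_dilation_acts_on_BK
    {K S : Type*} [NormedAddCommGroup K] [InnerProductSpace ℂ K] [CompleteSpace K]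
    [AddCommMonoid S]
    (p : K →L[ℂ] K) (hp : IsSelfAdjoint p) (hp2 : p * p = p)
    (B : VonNeumannAlgebra K)
    (hpB : p ∈ B)
    (hcorner : ∀ a : K →L[ℂ] K, a = p * a * p → a ∈ B)
    (θ : S → (K →L[ℂ] K) → (K →L[ℂ] K))
    (hθB : ∀ s, ∀ b ∈ B, θ s b ∈ B)
    (hθadd : ∀ s a b, θ s (a + b) = θ s a + θ s b)
    (hθmul : ∀ s a b, θ s (a * b) = θ s a * θ s b)
    (hθstar : ∀ s a, θ s (star a) = star (θ s a))
    (hspan : (Submodule.span ℂ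
        {x : K | ∃ (n : ℕ) (s : Fin n → S) (a : Fin n → (K →L[ℂ] K)) (h : K),
          (∀ i, a i = p * a i * p) ∧ p h = h ∧
          x = (List.ofFn fun i => θ (s i) (a i)).prod h}).topologicalClosure = ⊤) :
    (∀ q ∈ B.commutant, IsSelfAdjoint q → q * q = q → q = 0 ∨ q = 1) ∧
    (∀ x ∈ B.commutant, ∃ c : ℂ, x = c • (1 : K →L[ℂ] K)) ∧
    (∀ x : K →L[ℂ] K, x ∈ B) := by
  have key : ∀ q ∈ B.commutant, ∃ c : ℂ, q = c • (1 : K →L[ℂ] K) := by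
    intro q hq
    have hqc : ∀ g ∈ B, g * q = q * g := VonNeumannAlgebra.mem_commutant_iff.mp hq
    have hpq : p * q = q * p := hqc p hpB
    have hu : ∀ a : K →L[ℂ] K, a = p * a * p → (q * p) * a = a * (q * p) := by
      intro a hapa
      have hqa : a * q = q * a := hqc a (hcorner a hapa)
      have hpa : p * a = a := by rw [hapa, ← mul_assoc, ← mul_assoc, hp2]
      have hap : a * p = a := by rw [hapa, mul_assoc, hp2]
      calc (q * p) * a = q * a := by rw [mul_assoc, hpa]
        _ = a * (q * p) := by rw [← mul_assoc, hqa, mul_assoc, hap]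
    obtain ⟨c, hc⟩ := scalar_on_range p hp (q * p) hu
    refine ⟨c, ?_⟩
    have hqh : ∀ h : K, p h = h → q h = c • h := by
      intro h hh
      have := hc h hh
      rwa [ContinuousLinearMap.mul_apply, hh] at this
    have hker : (Submodule.span ℂ
        {x : K | ∃ (n : ℕ) (s : Fin n → S) (a : Fin n → (K →L[ℂ] K)) (h : K),
          (∀ i, a i = p * a i * p) ∧ p h = h ∧
          x = (List.ofFn fun i => θ (s i) (a i)).prod h}) ≤
        LinearMap.ker ((q - c • (1 : K →L[ℂ] K) : K →L[ℂ] K) : K →ₗ[ℂ] K) := by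
      rw [Submodule.span_le]
      rintro x ⟨n, s, a, h, haP, hph, rfl⟩
      have hBprod : (List.ofFn fun i => θ (s i) (a i)).prod ∈ B := by
        apply list_prod_mem
        intro b hb
        rw [List.mem_ofFn] at hb
        obtain ⟨i, rfl⟩ := hb
        exact hθB _ _ (hcorner _ (haP i))
      have hcomm := hqc _ hBprod
      have : q ((List.ofFn fun i => θ (s i) (a i)).prod h)
          = (List.ofFn fun i => θ (s i) (a i)).prod (q h) := by
        have := congrArg (fun f : K →L[ℂ] K => f h) hcomm.symm
        simpa using this
      simp only [SetLike.mem_coe, LinearMap.mem_ker, ContinuousLinearMap.coe_coe, ContinuousLinearMap.coe_sub',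
        Pi.sub_apply, ContinuousLinearMap.coe_smul', Pi.smul_apply,
        ContinuousLinearMap.one_apply, sub_eq_zero]
      rw [this, hqh h hph, map_smul]
    have htop : ∀ x : K, x ∈ LinearMap.ker ((q - c • (1 : K →L[ℂ] K) : K →L[ℂ] K) : K →ₗ[ℂ] K) := by
      intro x
      have hle := Submodule.topologicalClosure_minimal _ hker
        (ContinuousLinearMap.isClosed_ker _)
      rw [hspan] at hle
      exact hle trivial
    ext x
    have := htop x
    simp only [LinearMap.mem_ker, ContinuousLinearMap.coe_coe, ContinuousLinearMap.coe_sub', Pi.sub_apply,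
      ContinuousLinearMap.coe_smul', Pi.smul_apply, ContinuousLinearMap.one_apply,
      sub_eq_zero] at this
    simpa using this
  refine ⟨?_, key, ?_⟩
  · intro q hq _ hq2
    obtain ⟨c, rfl⟩ := key q hq
    by_cases h1 : (1 : K →L[ℂ] K) = 0
    · left; rw [h1, smul_zero]
    · have hcc : (c * c) • (1 : K →L[ℂ] K) = c • (1 : K →L[ℂ] K) := by
        rw [← hq2, smul_mul_smul_comm, one_mul]
      have hcc' : c * c = c := smul_left_injective ℂ h1 hcc
      have : c = 0 ∨ c = 1 := by
        rcases mul_eq_zero.mp (show c * (c - 1) = 0 by linear_combination hcc') with h | h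
        · exact Or.inl h
        · exact Or.inr (sub_eq_zero.mp h)
      rcases this with h | h
      · left; rw [h, zero_smul]
      · right; rw [h, one_smul]
  · intro x
    have hx : x ∈ Set.centralizer (Set.centralizer (B : Set (K →L[ℂ] K))) := by
      intro y hy
      have hy' : y ∈ B.commutant := by
        rw [← SetLike.mem_coe, VonNeumannAlgebra.coe_commutant]
        exact hy
      obtain ⟨c, rfl⟩ := key y hy'
      rw [smul_mul_assoc, one_mul, mul_smul_comm, mul_one]
    rw [B.centralizer_centralizer] at hx
    exact hx
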